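/- The monoid QM with presentation ⟨x, y, q | xq = qx, yq = qy, yx = xyq⟩ has the property that every element can be written uniquely in the normal form x^k y^l q^m with k, l, m ≥ 0. -/

import Mathlib

/- The monoid QM = ⟨x, y, q | xq = qx, yq = qy, yx = xyq⟩: every element is
uniquely of the normal form x^k * y^l * q^m. -/

namespace Stmt0

/-- Generators: `0 ↦ x`, `1 ↦ y`, `2 ↦ q`. -/
inductive QMrel : FreeMonoid (Fin 3) → FreeMonoid (Fin 3) → Prop
  | xq : QMrel (FreeMonoid.of 0 * FreeMonoid.of 2) (FreeMonoid.of 2 * FreeMonoid.of 0)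
  | yq : QMrel (FreeMonoid.of 1 * FreeMonoid.of 2) (FreeMonoid.of 2 * FreeMonoid.of 1)
  | yx : QMrel (FreeMonoid.of 1 * FreeMonoid.of 0)
      (FreeMonoid.of 0 * FreeMonoid.of 1 * FreeMonoid.of 2)

def QM := (conGen QMrel).Quotient

noncomputable instance : Monoid QM := Con.monoid _

noncomputable def x : QM := (conGen QMrel).mk' (FreeMonoid.of 0)
noncomputable def y : QM := (conGen QMrel).mk' (FreeMonoid.of 1)
noncomputable def q : QM := (conGen QMrel).mk' (FreeMonoid.of 2)

def NF := ℕ × ℕ × ℕ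

instance : Monoid NF where
  mul a b := (a.1 + b.1, a.2.1 + b.2.1, a.2.2 + b.2.2 + a.2.1 * b.1)
  one := (0, 0, 0)
  mul_assoc := by
    rintro ⟨a, b, c⟩ ⟨d, e, f⟩ ⟨g, h, i⟩
    show ((a + d + g, b + e + h, c + f + b * d + i + (b + e) * g) : ℕ × ℕ × ℕ)
      = (a + (d + g), b + (e + h), c + (f + i + e * g) + b * (d + g))
    refine Prod.ext (by ring) (Prod.ext (by ring) (by ring))
  one_mul := by
    rintro ⟨a, b, c⟩
    show ((0 + a, 0 + b, 0 + c + 0 * a) : ℕ × ℕ × ℕ) = (a, b, c)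
    simp
  mul_one := by
    rintro ⟨a, b, c⟩
    show ((a + 0, b + 0, c + 0 + b * 0) : ℕ × ℕ × ℕ) = (a, b, c)
    simp

lemma NF.mul_def (a b : NF) :
    a * b = ((a.1 + b.1, a.2.1 + b.2.1, a.2.2 + b.2.2 + a.2.1 * b.1) : ℕ × ℕ × ℕ) := rfl

lemma NF.one_def : (1 : NF) = ((0, 0, 0) : ℕ × ℕ × ℕ) := rfl

def gens : Fin 3 → NF := ![(1,0,0), (0,1,0), (0,0,1)]

noncomputable def φ0 : FreeMonoid (Fin 3) →* NF := FreeMonoid.lift gens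

lemma rel_sound : ∀ a b, QMrel a b → φ0 a = φ0 b := by
  rintro _ _ (h | h | h) <;>
    simp [φ0, gens, NF.mul_def, NF.one_def] <;> rfl

noncomputable def φ : QM →* NF :=
  Con.lift _ φ0 (Con.conGen_le.mpr fun a b h => rel_sound a b h)

lemma φx : φ x = ((1,0,0) : ℕ × ℕ × ℕ) := by
  rfl
lemma φy : φ y = ((0,1,0) : ℕ × ℕ × ℕ) := by
  rfl
lemma φq : φ q = ((0,0,1) : ℕ × ℕ × ℕ) := by
  rfl

lemma φx_pow (k : ℕ) : φ (x ^ k) = ((k, 0, 0) : ℕ × ℕ × ℕ) := by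
  induction k with
  | zero => simp [NF.one_def]; rfl
  | succ n ih => rw [pow_succ, map_mul, ih, φx]; rfl

lemma φy_pow (k : ℕ) : φ (y ^ k) = ((0, k, 0) : ℕ × ℕ × ℕ) := by
  induction k with
  | zero => simp [NF.one_def]; rfl
  | succ n ih => rw [pow_succ, map_mul, ih, φy]; rfl

lemma φq_pow (k : ℕ) : φ (q ^ k) = ((0, 0, k) : ℕ × ℕ × ℕ) := by
  induction k with
  | zero => simp [NF.one_def]; rfl
  | succ n ih => rw [pow_succ, map_mul, ih, φq]; rfl

lemma φ_nf (k l m : ℕ) : φ (x ^ k * y ^ l * q ^ m) = ((k, l, m) : ℕ × ℕ × ℕ) := by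
  rw [map_mul, map_mul, φx_pow, φy_pow, φq_pow]
  show ((k + 0 + 0, 0 + l + 0, 0 + 0 + 0 * 0 + m + (0 + l) * 0) : ℕ × ℕ × ℕ) = (k, l, m)
  simp

-- relations inside QM
lemma xq_comm : x * q = q * x :=
  Quotient.sound (ConGen.Rel.of _ _ QMrel.xq)

lemma yq_comm : y * q = q * y :=
  Quotient.sound (ConGen.Rel.of _ _ QMrel.yq)

lemma yx_rel : y * x = x * y * q :=
  Quotient.sound (ConGen.Rel.of _ _ QMrel.yx)

lemma comm_qx : Commute q x := xq_comm.symm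
lemma comm_qy : Commute q y := yq_comm.symm

lemma q_xpow (k : ℕ) : q * x ^ k = x ^ k * q := (comm_qx.pow_right k).eq
lemma qpow_ypow (k l : ℕ) : q ^ k * y ^ l = y ^ l * q ^ k :=
  ((comm_qy.pow_right l).pow_left k).eq

lemma y_xpow (k : ℕ) : y * x ^ k = x ^ k * y * q ^ k := by
  induction k with
  | zero => simp
  | succ n ih =>
    calc y * x ^ (n + 1) = (y * x) * x ^ n := by rw [pow_succ', ← mul_assoc]
      _ = x * (y * x ^ n) * q := by
          rw [yx_rel, mul_assoc, mul_assoc, q_xpow]; simp [mul_assoc]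
      _ = x ^ (n + 1) * y * q ^ (n + 1) := by
          rw [ih, pow_succ', pow_succ]; simp [mul_assoc]

lemma exists_nf (a : QM) : ∃ t : ℕ × ℕ × ℕ, a = x ^ t.1 * y ^ t.2.1 * q ^ t.2.2 := by
  obtain ⟨w, rfl⟩ := Con.mk'_surjective (c := conGen QMrel) a
  induction w using FreeMonoid.recOn with
  | one => exact ⟨(0, 0, 0), by simp; rfl⟩
  | of_mul g w ih =>
    obtain ⟨⟨k, l, m⟩, h⟩ := ih
    rw [map_mul, h]
    fin_cases g
    · refine ⟨(k + 1, l, m), ?_⟩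
      show x * (x ^ k * y ^ l * q ^ m) = x ^ (k + 1) * y ^ l * q ^ m
      rw [← mul_assoc, ← mul_assoc, ← pow_succ']
    · refine ⟨(k, l + 1, k + m), ?_⟩
      show y * (x ^ k * y ^ l * q ^ m) = x ^ k * y ^ (l + 1) * q ^ (k + m)
      calc y * (x ^ k * y ^ l * q ^ m)
          = (y * x ^ k) * y ^ l * q ^ m := by rw [mul_assoc, mul_assoc, mul_assoc]
        _ = x ^ k * y * (q ^ k * y ^ l) * q ^ m := by rw [y_xpow]; simp [mul_assoc]
        _ = x ^ k * (y * y ^ l) * (q ^ k * q ^ m) := by rw [qpow_ypow]; simp [mul_assoc]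
        _ = x ^ k * y ^ (l + 1) * q ^ (k + m) := by rw [← pow_succ', ← pow_add]
    · refine ⟨(k, l, m + 1), ?_⟩
      show q * (x ^ k * y ^ l * q ^ m) = x ^ k * y ^ l * q ^ (m + 1)
      calc q * (x ^ k * y ^ l * q ^ m)
          = (q * x ^ k) * y ^ l * q ^ m := by rw [mul_assoc, mul_assoc, mul_assoc]
        _ = x ^ k * (q ^ 1 * y ^ l) * q ^ m := by rw [q_xpow]; simp [mul_assoc]
        _ = x ^ k * y ^ l * q ^ (m + 1) := by
            rw [qpow_ypow, mul_assoc, mul_assoc, ← pow_add, add_comm 1 m, ← mul_assoc]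

theorem stmt0 :
    ∀ a : QM, ∃! t : ℕ × ℕ × ℕ, a = x ^ t.1 * y ^ t.2.1 * q ^ t.2.2 := by
  intro a
  obtain ⟨t, ht⟩ := exists_nf a
  refine ⟨t, ht, fun s hs => ?_⟩
  have : φ (x ^ s.1 * y ^ s.2.1 * q ^ s.2.2) = φ (x ^ t.1 * y ^ t.2.1 * q ^ t.2.2) := by
    rw [← hs, ← ht]
  rw [φ_nf, φ_nf] at this
  obtain ⟨s1, s2, s3⟩ := s
  obtain ⟨t1, t2, t3⟩ := t
  exact this

end Stmt0
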